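/- Consider the birth-and-death chain with parameters L ≥ 1 and α ∈ (0,1], and a time horizon T. Let A = (A_t)_{t=0}^T be any separating sequence such that 0 ∈ A_t and L ∉ A_t for all 0 ≤ t ≤ T. For 0 ≤ a ≤ T define the cyclically shifted separating sequence A^a = (A^a_t)_{t=0}^T by A^a_t := A_{(t+a) mod (T+1)}. Then S^A_T(0,L) ≤ S^{A^a}_T(0,L) + 12·L·α. -/

import Mathlib

open MeasureTheory Filter Topology

/-- Transition probabilities of the birth-and-death chain on `{0,…,L}` with parameter `α`:
`P(0,1) = P(L,L−1) = α`, `P(0,0) = P(L,L) = 1−α`, and `P(i,i+1) = P(i,i−1) = 1/2` for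
`0 < i < L`. -/
noncomputable def bdKernel (L : ℕ) (α : ℝ) (i j : ℕ) : ℝ :=
  if i = 0 then (if j = 1 then α else if j = 0 then 1 - α else 0)
  else if i = L then (if j = L - 1 then α else if j = L then 1 - α else 0)
  else if i < L then (if j = i + 1 ∨ j = i - 1 then 1 / 2 else 0)
  else 0

/-- `bdDist L α x t j = P^t(x, j)`, the probability that the birth-and-death chain started at
`x` is at state `j` at time `t`. -/
noncomputable def bdDist (L : ℕ) (α : ℝ) (x : ℕ) : ℕ → ℕ → ℝ
  | 0 => fun j => if j = x then 1 else 0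
  | t + 1 => fun j => ∑ i ∈ Finset.range (L + 1), bdDist L α x t i * bdKernel L α i j

/-- Total variation distance between two distributions on the state space `{0,…,L}`. -/
noncomputable def bdTV (L : ℕ) (μ ν : ℕ → ℝ) : ℝ :=
  ⨆ A : Set ℕ,
    |∑ i ∈ Finset.range (L + 1), Set.indicator A μ i -
      ∑ i ∈ Finset.range (L + 1), Set.indicator A ν i|

open Classical in
/-- `bdStay L α T x A = P(X_t ∈ A_t for all 0 ≤ t ≤ T | X_0 = x)` for the birth-and-death
chain with parameters `L` and `α`. -/
noncomputable def bdStay (L : ℕ) (α : ℝ) (T : ℕ) (x : ℕ) (A : ℕ → Set ℕ) : ℝ :=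
  ∑ p : Fin (T + 1) → Fin (L + 1),
    if (p 0 : ℕ) = x ∧ ∀ t : Fin (T + 1), (p t : ℕ) ∈ A (t : ℕ) then
      ∏ i : Fin T, bdKernel L α (p i.castSucc) (p i.succ) else 0

/-- The separation `S^A_T(0,L)` of a separating sequence `A` for the birth-and-death chain. -/
noncomputable def bdSep (L : ℕ) (α : ℝ) (T : ℕ) (A : ℕ → Set ℕ) : ℝ :=
  bdStay L α T 0 A + bdStay L α T L (fun t => (A t)ᶜ)

section SeparationAux

variable {L : ℕ} {α : ℝ}

open Fin.NatCast

lemma K_nonneg (hα : α ∈ Set.Ioc (0:ℝ) 1) (i j : ℕ) : 0 ≤ bdKernel L α i j := by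
  obtain ⟨h0, h1⟩ := hα
  unfold bdKernel
  split_ifs <;> linarith

lemma K_rowsum (hL : 1 ≤ L) {i : ℕ} (hi : i ≤ L) :
    ∑ j ∈ Finset.range (L+1), bdKernel L α i j = 1 := by
  rcases Nat.eq_or_lt_of_le hi with hiL | hiL
  · -- i = L
    subst hiL
    rcases Nat.eq_zero_or_pos i with h0 | h0
    · omega
    have hne : i ≠ 0 := by omega
    have key : ∀ j, bdKernel i α i j
        = (if j = i - 1 then α else 0) + (if j = i then 1 - α else 0) := by
      intro j
      unfold bdKernel
      have : i - 1 ≠ i := by omega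
      split_ifs <;> first | ring1 | omega | (exfalso; omega)
    simp only [key]
    rw [Finset.sum_add_distrib, Finset.sum_ite_eq' (Finset.range (i+1)),
      Finset.sum_ite_eq' (Finset.range (i+1))]
    have h1 : i - 1 ∈ Finset.range (i+1) := by simp
    have h2 : i ∈ Finset.range (i+1) := by simp
    rw [if_pos h1, if_pos h2]; ring
  · rcases Nat.eq_zero_or_pos i with h0 | h0
    · subst h0
      have key : ∀ j, bdKernel L α 0 j
          = (if j = 1 then α else 0) + (if j = 0 then 1 - α else 0) := by
        intro j
        unfold bdKernel
        split_ifs <;> first | ring1 | omega | (exfalso; omega)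
      simp only [key]
      rw [Finset.sum_add_distrib, Finset.sum_ite_eq' (Finset.range (L+1)),
        Finset.sum_ite_eq' (Finset.range (L+1))]
      have h1 : 1 ∈ Finset.range (L+1) := by simp; omega
      have h2 : 0 ∈ Finset.range (L+1) := by simp
      rw [if_pos h1, if_pos h2]; ring
    · have hne : i ≠ 0 := by omega
      have hneL : i ≠ L := by omega
      have key : ∀ j, bdKernel L α i j
          = (if j = i + 1 then (1:ℝ)/2 else 0) + (if j = i - 1 then (1:ℝ)/2 else 0) := by
        intro j
        unfold bdKernel
        have : i + 1 ≠ i - 1 := by omega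
        split_ifs <;> first | ring1 | omega | (exfalso; omega)
      simp only [key]
      rw [Finset.sum_add_distrib, Finset.sum_ite_eq' (Finset.range (L+1)),
        Finset.sum_ite_eq' (Finset.range (L+1))]
      have h1 : i + 1 ∈ Finset.range (L+1) := by simp; omega
      have h2 : i - 1 ∈ Finset.range (L+1) := by simp; omega
      rw [if_pos h1, if_pos h2]; norm_num

lemma K_rowsum_fin (hL : 1 ≤ L) (i : Fin (L+1)) :
    ∑ j : Fin (L+1), bdKernel L α (i : ℕ) (j : ℕ) = 1 := by
  rw [Fin.sum_univ_eq_sum_range (fun j => bdKernel L α (i:ℕ) j)]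
  exact K_rowsum hL i.is_le


/-- weight of a path -/
noncomputable def W (L : ℕ) (α : ℝ) (T : ℕ) (p : Fin (T+1) → Fin (L+1)) : ℝ :=
  ∏ i : Fin T, bdKernel L α (p i.castSucc : ℕ) (p i.succ : ℕ)

lemma W_nonneg (hα : α ∈ Set.Ioc (0:ℝ) 1) (T : ℕ) (p : Fin (T+1) → Fin (L+1)) :
    0 ≤ W L α T p :=
  Finset.prod_nonneg fun _ _ => K_nonneg hα _ _

/-- index in `Fin (T+1)` attached to a natural number, reduced mod T+1 -/
def idx (T : ℕ) (t : ℕ) : Fin (T+1) := ⟨t % (T+1), Nat.mod_lt _ (Nat.succ_pos T)⟩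

lemma idx_val {T t : ℕ} (h : t ≤ T) : ((idx T t : Fin (T+1)) : ℕ) = t := by
  simp [idx, Nat.mod_eq_of_lt (by omega : t < T + 1)]

lemma idx_zero (T : ℕ) : idx T 0 = 0 := by
  apply Fin.ext; simp [idx]

/-- snoc equivalence -/
def snocE (n : ℕ) (β : Type*) : ((Fin n → β) × β) ≃ (Fin (n+1) → β) where
  toFun q := Fin.snoc q.1 q.2
  invFun p := (Fin.init p, p (Fin.last n))
  left_inv q := by simp [Fin.init_snoc, Fin.snoc_last]
  right_inv p := by simp [Fin.snoc_init_self]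

lemma sum_snoc {n : ℕ} (f : (Fin (n+1) → Fin (L+1)) → ℝ) :
    ∑ p : Fin (n+1) → Fin (L+1), f p
      = ∑ q : Fin n → Fin (L+1), ∑ y : Fin (L+1), f (Fin.snoc q y) := by
  rw [← Equiv.sum_comp (snocE n (Fin (L+1))) f, Fintype.sum_prod_type]
  rfl

lemma W_snoc (T : ℕ) (q : Fin (T+1) → Fin (L+1)) (y : Fin (L+1)) :
    W L α (T+1) (Fin.snoc q y) = W L α T q * bdKernel L α (q (Fin.last T) : ℕ) (y : ℕ) := by
  unfold W
  rw [Fin.prod_univ_castSucc]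
  congr 1
  · apply Finset.prod_congr rfl
    intro i _
    rw [show (i.castSucc.castSucc : Fin (T+2)) = (i.castSucc).castSucc from rfl,
      Fin.snoc_castSucc, show (i.castSucc.succ : Fin (T+2)) = (i.succ).castSucc from
        (Fin.succ_castSucc i).symm ▸ rfl, Fin.snoc_castSucc]
  · rw [show ((Fin.last T).succ : Fin (T+2)) = Fin.last (T+1) from Fin.succ_last T,
      Fin.snoc_last, Fin.snoc_castSucc]

/-- marginal: probability of being at j at time t, for path space of length T -/
noncomputable def marg (L : ℕ) (α : ℝ) (T x t j : ℕ) : ℝ :=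
  ∑ p : Fin (T+1) → Fin (L+1),
    if (p 0 : ℕ) = x ∧ (p (idx T t) : ℕ) = j then W L α T p else 0

lemma marg_nonneg (hα : α ∈ Set.Ioc (0:ℝ) 1) (T x t j : ℕ) : 0 ≤ marg L α T x t j := by
  apply Finset.sum_nonneg
  intro p _
  split_ifs
  · exact W_nonneg hα T p
  · exact le_refl 0

lemma idx_add_period (T s : ℕ) : idx T (s + (T+1)) = idx T s := by
  apply Fin.ext
  simp [idx, Nat.add_mod_right]


lemma fin_add_cast_eq_idx (T a : ℕ) (t : Fin (T+1)) :
    t + (a : Fin (T+1)) = idx T ((t : ℕ) + a) := by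
  apply Fin.ext
  show ((t + (a : Fin (T+1)) : Fin (T+1)) : ℕ) = ((t:ℕ) + a) % (T+1)
  rw [Fin.add_def, Fin.val_natCast]
  conv_rhs => rw [Nat.add_mod]
  rw [Nat.mod_eq_of_lt t.isLt]


lemma marg_strip (hL : 1 ≤ L) (T x t j : ℕ) (ht : t ≤ T) :
    marg L α (T+1) x t j = marg L α T x t j := by
  unfold marg
  rw [sum_snoc]
  have key : ∀ (q : Fin (T+1) → Fin (L+1)) (y : Fin (L+1)),
      (if ((Fin.snoc q y : Fin (T+2) → Fin (L+1)) 0 : ℕ) = x ∧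
          ((Fin.snoc q y : Fin (T+2) → Fin (L+1)) (idx (T+1) t) : ℕ) = j then
        W L α (T+1) (Fin.snoc q y) else 0)
      = (if (q 0 : ℕ) = x ∧ (q (idx T t) : ℕ) = j then W L α T q else 0)
          * bdKernel L α (q (Fin.last T) : ℕ) (y : ℕ) := by
    intro q y
    have h0 : (0 : Fin (T+2)) = Fin.castSucc (0 : Fin (T+1)) := rfl
    have hidx : (idx (T+1) t) = Fin.castSucc (idx T t) := by
      apply Fin.ext
      simp [Fin.castSucc]
      rw [idx_val (le_trans ht (Nat.le_succ T)), idx_val ht]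
    rw [h0, hidx, Fin.snoc_castSucc, Fin.snoc_castSucc, W_snoc]
    split_ifs <;> simp
  simp only [key]
  have : ∀ q : Fin (T+1) → Fin (L+1),
      ∑ y : Fin (L+1), (if (q 0 : ℕ) = x ∧ (q (idx T t) : ℕ) = j then W L α T q else 0)
        * bdKernel L α (q (Fin.last T) : ℕ) (y : ℕ)
      = (if (q 0 : ℕ) = x ∧ (q (idx T t) : ℕ) = j then W L α T q else 0) := by
    intro q
    rw [← Finset.mul_sum, K_rowsum_fin hL, mul_one]
  simp only [this]

lemma marg_stab (hL : 1 ≤ L) (T x t j : ℕ) (ht : t ≤ T) :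
    marg L α T x t j = marg L α t x t j := by
  induction T with
  | zero => cases Nat.le_zero.mp ht; rfl
  | succ T ih =>
    rcases Nat.lt_or_ge t (T+1) with h | h
    · rw [marg_strip hL T x t j (by omega), ih (by omega)]
    · have : t = T + 1 := by omega
      subst this; rfl

lemma marg_base (x j : ℕ) (hx : x ≤ L) :
    marg L α 0 x 0 j = if j = x then 1 else 0 := by
  unfold marg
  have hW : ∀ p : Fin 1 → Fin (L+1), W L α 0 p = 1 := by
    intro p; unfold W; simp
  rw [sum_snoc, Fintype.sum_unique]
  have this : ∀ (q : Fin 0 → Fin (L+1)) (y : Fin (L+1)),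
      (if ((Fin.snoc q y : Fin 1 → Fin (L+1)) 0 : ℕ) = x ∧
          ((Fin.snoc q y : Fin 1 → Fin (L+1)) (idx 0 0) : ℕ) = j
        then W L α 0 (Fin.snoc q y) else 0)
      = if (y : ℕ) = x ∧ (y : ℕ) = j then 1 else 0 := by
    intro q y
    rw [hW]
    have h00 : ((0 : Fin 1)) = Fin.last 0 := rfl
    have hix : (idx 0 0) = Fin.last 0 := rfl
    rw [h00, hix, Fin.snoc_last]
  simp only [this]
  by_cases hjx : j = x
  · subst hjx
    simp only [and_self]
    rw [Fin.sum_univ_eq_sum_range (fun m => if m = j then (1:ℝ) else 0)]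
    rw [Finset.sum_ite_eq' (Finset.range (L+1))]
    simp [Nat.lt_succ_of_le hx]
  · rw [if_neg hjx]
    apply Finset.sum_eq_zero
    intro y _
    rw [if_neg]
    rintro ⟨h1, h2⟩; exact hjx (h2 ▸ h1 ▸ rfl)

lemma marg_rec (hL : 1 ≤ L) (t x j : ℕ) (hj : j ≤ L) :
    marg L α (t+1) x (t+1) j
      = ∑ i ∈ Finset.range (L+1), marg L α t x t i * bdKernel L α i j := by
  unfold marg
  rw [sum_snoc]
  have key : ∀ (q : Fin (t+1) → Fin (L+1)) (y : Fin (L+1)),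
      (if ((Fin.snoc q y : Fin (t+2) → Fin (L+1)) 0 : ℕ) = x ∧
          ((Fin.snoc q y : Fin (t+2) → Fin (L+1)) (idx (t+1) (t+1)) : ℕ) = j then
        W L α (t+1) (Fin.snoc q y) else 0)
      = (if (q 0 : ℕ) = x then W L α t q else 0)
          * (if (y : ℕ) = j then bdKernel L α (q (Fin.last t) : ℕ) (y : ℕ) else 0) := by
    intro q y
    have h0 : (0 : Fin (t+2)) = Fin.castSucc (0 : Fin (t+1)) := rfl
    have hidx : (idx (t+1) (t+1)) = Fin.last (t+1) := by
      apply Fin.ext; rw [idx_val (le_refl (t+1))]; rfl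
    rw [h0, hidx, Fin.snoc_castSucc, Fin.snoc_last, W_snoc]
    split_ifs <;> simp_all
  simp only [key]
  -- now: ∑ q ∑ y (ifq) * (ify K) = ∑ i marg * K i j
  have inner : ∀ q : Fin (t+1) → Fin (L+1),
      ∑ y : Fin (L+1), (if (q 0 : ℕ) = x then W L α t q else 0)
          * (if (y : ℕ) = j then bdKernel L α (q (Fin.last t) : ℕ) (y : ℕ) else 0)
      = (if (q 0 : ℕ) = x then W L α t q else 0) * bdKernel L α (q (Fin.last t) : ℕ) j := by
    intro q
    rw [← Finset.mul_sum]
    congr 1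
    rw [Fin.sum_univ_eq_sum_range (fun m => if m = j then bdKernel L α (q (Fin.last t) : ℕ) m else 0)]
    rw [Finset.sum_ite_eq' (Finset.range (L+1))]
    simp [Nat.lt_succ_of_le hj]
  simp only [inner]
  -- expand K (q last) j over i
  have expand : ∀ q : Fin (t+1) → Fin (L+1),
      (if (q 0 : ℕ) = x then W L α t q else 0) * bdKernel L α (q (Fin.last t) : ℕ) j
      = ∑ i ∈ Finset.range (L+1),
          (if (q 0 : ℕ) = x ∧ (q (Fin.last t) : ℕ) = i then W L α t q else 0)
            * bdKernel L α i j := by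
    intro q
    have this1 : ∀ i : ℕ,
        (if (q 0 : ℕ) = x ∧ (q (Fin.last t) : ℕ) = i then W L α t q else 0) * bdKernel L α i j
        = if (q (Fin.last t) : ℕ) = i then (if (q 0 : ℕ) = x then W L α t q else 0) * bdKernel L α i j else 0 := by
      intro i
      by_cases h1 : (q 0 : ℕ) = x <;> by_cases h2 : (q (Fin.last t) : ℕ) = i <;>
        simp [h1, h2]
    simp only [this1]
    rw [Finset.sum_ite_eq (Finset.range (L+1)) ((q (Fin.last t) : ℕ))
      (fun i => (if (q 0 : ℕ) = x then W L α t q else 0) * bdKernel L α i j)]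
    rw [if_pos (by simp [Nat.lt_succ_of_le (Fin.is_le (q (Fin.last t)))] :
      (q (Fin.last t) : ℕ) ∈ Finset.range (L+1))]
  simp only [expand]
  rw [Finset.sum_comm]
  apply Finset.sum_congr rfl
  intro i _
  rw [Finset.sum_mul]
  apply Finset.sum_congr rfl
  intro q _
  have hlast : (idx t t) = Fin.last t := by
    apply Fin.ext; rw [idx_val (le_refl t)]; rfl
  rw [hlast]

lemma marg_mass (hL : 1 ≤ L) (x : ℕ) (hx : x ≤ L) :
    ∀ t, ∑ j ∈ Finset.range (L+1), marg L α t x t j = 1 := by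
  intro t
  induction t with
  | zero =>
    have e1 : ∑ j ∈ Finset.range (L+1), marg L α 0 x 0 j
        = ∑ j ∈ Finset.range (L+1), if j = x then (1:ℝ) else 0 :=
      Finset.sum_congr rfl (fun j _ => marg_base x j hx)
    rw [e1, Finset.sum_ite_eq' (Finset.range (L+1))]
    simp [Nat.lt_succ_of_le hx]
  | succ t ih =>
    have e1 : ∑ j ∈ Finset.range (L+1), marg L α (t+1) x (t+1) j
        = ∑ j ∈ Finset.range (L+1), ∑ i ∈ Finset.range (L+1),
            marg L α t x t i * bdKernel L α i j :=
      Finset.sum_congr rfl (fun j hj => marg_rec hL t x j (by simp at hj; omega))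
    have e2 : ∑ i ∈ Finset.range (L+1),
        (∑ j ∈ Finset.range (L+1), marg L α t x t i * bdKernel L α i j)
        = ∑ i ∈ Finset.range (L+1), marg L α t x t i := by
      apply Finset.sum_congr rfl
      intro i hi
      rw [← Finset.mul_sum, K_rowsum hL (by simp at hi; omega), mul_one]
    rw [e1, Finset.sum_comm, e2, ih]

lemma marg_le_one (hL : 1 ≤ L) (hα : α ∈ Set.Ioc (0:ℝ) 1) (x : ℕ) (hx : x ≤ L) (t i : ℕ)
    (hi : i ≤ L) : marg L α t x t i ≤ 1 := by
  rw [← marg_mass hL x hx t]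
  apply Finset.single_le_sum (f := fun j => marg L α t x t j)
  · intro j _; exact marg_nonneg hα t x t j
  · simp [Nat.lt_succ_of_le hi]

lemma K_vanish (t : ℕ) {i j : ℕ} (hj0 : 0 < j) (hjL : j < L)
    (h1 : i ≠ j - 1) (h2 : i ≠ j + 1) : bdKernel L α i j = 0 := by
  unfold bdKernel
  split_ifs <;> first | rfl | omega | (exfalso; first | assumption | omega)

lemma K_left {j : ℕ} (hj0 : 0 < j) (hjL : j < L) :
    bdKernel L α (j-1) j = if j = 1 then α else 1/2 := by
  unfold bdKernel
  split_ifs <;> first | rfl | omega | (exfalso; first | assumption | omega)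

lemma K_right {j : ℕ} (hj0 : 0 < j) (hjL : j < L) :
    bdKernel L α (j+1) j = if j + 1 = L then α else 1/2 := by
  unfold bdKernel
  split_ifs <;> first | rfl | omega | (exfalso; first | assumption | omega)

lemma marg_interior (hL : 1 ≤ L) (hα : α ∈ Set.Ioc (0:ℝ) 1) (x : ℕ) (hx : x = 0 ∨ x = L) :
    ∀ t j, 0 < j → j < L → marg L α t x t j ≤ 2 * α := by
  have hx' : x ≤ L := by rcases hx with h | h <;> omega
  intro t
  induction t with
  | zero =>
    intro j hj0 hjL
    rw [marg_base x j hx']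
    have : j ≠ x := by rcases hx with h | h <;> omega
    rw [if_neg this]
    nlinarith [hα.1]
  | succ t ih =>
    intro j hj0 hjL
    rw [marg_rec hL t x j (le_of_lt hjL)]
    have hsub : ({j-1, j+1} : Finset ℕ) ⊆ Finset.range (L+1) := by
      intro m hm
      simp only [Finset.mem_insert, Finset.mem_singleton] at hm
      simp only [Finset.mem_range]
      omega
    rw [← Finset.sum_subset hsub (by
      intro i hi hni
      simp only [Finset.mem_insert, Finset.mem_singleton] at hni
      push_neg at hni
      rw [K_vanish t hj0 hjL (by omega) (by omega), mul_zero])]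
    rw [Finset.sum_pair (by omega : j - 1 ≠ j + 1)]
    have hb1 : marg L α t x t (j-1) * bdKernel L α (j-1) j ≤ α := by
      rw [K_left hj0 hjL]
      by_cases h1 : j = 1
      · rw [if_pos h1]
        have h2 : marg L α t x t (j-1) ≤ 1 := marg_le_one hL hα x hx' t (j-1) (by omega)
        nlinarith [marg_nonneg (L := L) hα t x t (j-1), hα.1]
      · rw [if_neg h1]
        have h2 : marg L α t x t (j-1) ≤ 2 * α := ih (j-1) (by omega) (by omega)
        nlinarith [marg_nonneg (L := L) hα t x t (j-1)]
    have hb2 : marg L α t x t (j+1) * bdKernel L α (j+1) j ≤ α := by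
      rw [K_right hj0 hjL]
      by_cases h1 : j + 1 = L
      · rw [if_pos h1]
        have h2 : marg L α t x t (j+1) ≤ 1 := marg_le_one hL hα x hx' t (j+1) (by omega)
        nlinarith [marg_nonneg (L := L) hα t x t (j+1), hα.1]
      · rw [if_neg h1]
        have h2 : marg L α t x t (j+1) ≤ 2 * α := ih (j+1) (by omega) (by omega)
        nlinarith [marg_nonneg (L := L) hα t x t (j+1)]
    linarith

/-- the edge weight function along the (cyclically extended) path -/
noncomputable def gfun (L : ℕ) (α : ℝ) (T : ℕ) (p : Fin (T+1) → Fin (L+1)) (s : ℕ) : ℝ :=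
  bdKernel L α (p (idx T s) : ℕ) (p (idx T (s+1)) : ℕ)

lemma gfun_period (T : ℕ) (p : Fin (T+1) → Fin (L+1)) (s : ℕ) :
    gfun L α T p (s + (T+1)) = gfun L α T p s := by
  unfold gfun
  rw [idx_add_period, show s + (T+1) + 1 = (s+1) + (T+1) by omega, idx_add_period]

lemma W_eq_prod_gfun (T : ℕ) (p : Fin (T+1) → Fin (L+1)) :
    W L α T p = ∏ s ∈ Finset.range T, gfun L α T p s := by
  rw [← Fin.prod_univ_eq_prod_range (fun s => gfun L α T p s) T]
  apply Finset.prod_congr rfl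
  intro i _
  unfold gfun
  have e1 : idx T (i : ℕ) = i.castSucc := by
    apply Fin.ext
    rw [idx_val (by omega : (i:ℕ) ≤ T), Fin.coe_castSucc]
  have e2 : idx T ((i : ℕ) + 1) = i.succ := by
    apply Fin.ext
    rw [idx_val (by omega : (i:ℕ)+1 ≤ T), Fin.val_succ]
  rw [e1, e2]

lemma W_rot_eq_prod (T a : ℕ) (p : Fin (T+1) → Fin (L+1)) :
    W L α T (fun t => p (t + (a : Fin (T+1))))
      = ∏ s ∈ Finset.range T, gfun L α T p (s + a) := by
  rw [← Fin.prod_univ_eq_prod_range (fun s => gfun L α T p (s + a)) T]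
  apply Finset.prod_congr rfl
  intro i _
  unfold gfun
  show bdKernel L α ((p (i.castSucc + (a : Fin (T+1)))) : ℕ) ((p (i.succ + (a : Fin (T+1)))) : ℕ)
      = bdKernel L α ((p (idx T ((i:ℕ) + a))) : ℕ) ((p (idx T ((i:ℕ) + a + 1))) : ℕ)
  rw [fin_add_cast_eq_idx T a i.castSucc, fin_add_cast_eq_idx T a i.succ,
    Fin.coe_castSucc, Fin.val_succ, show (i:ℕ)+1+a = (i:ℕ)+a+1 from by omega]

lemma W_rot (T a : ℕ) (ha1 : 1 ≤ a) (ha : a ≤ T) (x : ℕ)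
    (p : Fin (T+1) → Fin (L+1))
    (h0 : (p (idx T 0) : ℕ) = x) (h1 : (p (idx T (a-1)) : ℕ) = x)
    (h2 : (p (idx T a) : ℕ) = x) (h3 : (p (idx T T) : ℕ) = x) :
    W L α T (fun t => p (t + (a : Fin (T+1)))) = W L α T p := by
  set g := gfun L α T p with hg
  have hga : g (a-1) = bdKernel L α x x := by
    rw [hg]; unfold gfun
    rw [show (a-1) + 1 = a by omega, h1, h2]
  have hgT : g T = bdKernel L α x x := by
    rw [hg]; unfold gfun
    rw [show T + 1 = 0 + (T+1) by omega, idx_add_period, h3, h0]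
  rw [W_rot_eq_prod, W_eq_prod_gfun]
  -- LHS : ∏ s in range T, g (s + a)
  have lhs1 : ∏ s ∈ Finset.range T, g (s + a) = ∏ s ∈ Finset.Ico a (T+a), g s := by
    rw [Finset.prod_Ico_eq_prod_range]
    rw [show T + a - a = T by omega]
    apply Finset.prod_congr rfl
    intro i _
    rw [add_comm]
  have lhs2 : ∏ s ∈ Finset.Ico a (T+a), g s
      = (∏ s ∈ Finset.Ico a (T+1), g s) * ∏ s ∈ Finset.Ico (T+1) (T+a), g s := by
    rw [Finset.prod_Ico_consecutive _ (by omega : a ≤ T+1) (by omega : T+1 ≤ T+a)]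
  have lhs3 : ∏ s ∈ Finset.Ico (T+1) (T+a), g s = ∏ s ∈ Finset.range (a-1), g s := by
    rw [Finset.prod_Ico_eq_prod_range]
    rw [show T + a - (T+1) = a - 1 by omega]
    apply Finset.prod_congr rfl
    intro i _
    rw [show T + 1 + i = i + (T+1) by omega, hg, gfun_period]
  have lhs4 : ∏ s ∈ Finset.Ico a (T+1), g s = (∏ s ∈ Finset.Ico a T, g s) * g T :=
    Finset.prod_Ico_succ_top (by omega : a ≤ T) g
  have rhs1 : ∏ s ∈ Finset.range T, g s
      = ((∏ s ∈ Finset.range (a-1), g s) * g (a-1)) * ∏ s ∈ Finset.Ico a T, g s := by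
    rw [Finset.range_eq_Ico,
      ← Finset.prod_Ico_consecutive g (by omega : 0 ≤ a) (by omega : a ≤ T)]
    congr 1
    rw [show a = (a-1) + 1 by omega, Finset.prod_Ico_succ_top (by omega : 0 ≤ a-1) g,
      ← Finset.range_eq_Ico]
    rw [show a - 1 + 1 - 1 = a - 1 by omega]
  rw [lhs1, lhs2, lhs3, lhs4, rhs1, hga, hgT]
  ring

open Classical

lemma bad_bound (hL : 1 ≤ L) (hα : α ∈ Set.Ioc (0:ℝ) 1) (T x t : ℕ) (ht : t ≤ T)
    (hx : x = 0 ∨ x = L) :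
    ∑ p : Fin (T+1) → Fin (L+1),
      (if (p 0 : ℕ) = x ∧ 0 < (p (idx T t) : ℕ) ∧ (p (idx T t) : ℕ) < L
        then W L α T p else 0)
      ≤ 2 * ((L - 1 : ℕ) : ℝ) * α := by
  have pt : ∀ p : Fin (T+1) → Fin (L+1),
      (if (p 0 : ℕ) = x ∧ 0 < (p (idx T t) : ℕ) ∧ (p (idx T t) : ℕ) < L
        then W L α T p else 0)
      = ∑ j ∈ Finset.Ico 1 L,
          (if (p 0 : ℕ) = x ∧ (p (idx T t) : ℕ) = j then W L α T p else 0) := by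
    intro p
    by_cases hc : (p 0 : ℕ) = x ∧ 0 < (p (idx T t) : ℕ) ∧ (p (idx T t) : ℕ) < L
    · rw [if_pos hc]
      have hmem : (p (idx T t) : ℕ) ∈ Finset.Ico 1 L := by
        simp only [Finset.mem_Ico]
        omega
      have e : ∀ j : ℕ, (if (p 0 : ℕ) = x ∧ (p (idx T t) : ℕ) = j then W L α T p else 0)
          = if (p (idx T t) : ℕ) = j then W L α T p else 0 := by
        intro j
        by_cases h : (p (idx T t) : ℕ) = j <;> simp [h, hc.1]
      simp only [e]
      rw [Finset.sum_ite_eq (Finset.Ico 1 L) ((p (idx T t) : ℕ)) (fun _ => W L α T p),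
        if_pos hmem]
    · rw [if_neg hc]
      symm
      apply Finset.sum_eq_zero
      intro j hj
      simp only [Finset.mem_Ico] at hj
      rw [if_neg]
      rintro ⟨hp0, hpj⟩
      exact hc ⟨hp0, by omega, by omega⟩
  simp only [pt]
  rw [Finset.sum_comm]
  have inner_le : ∀ j ∈ Finset.Ico 1 L,
      (∑ p : Fin (T+1) → Fin (L+1),
        if (p 0 : ℕ) = x ∧ (p (idx T t) : ℕ) = j then W L α T p else 0) ≤ 2 * α := by
    intro j hj
    simp only [Finset.mem_Ico] at hj
    have : marg L α T x t j ≤ 2 * α := by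
      rw [marg_stab hL T x t j ht]
      exact marg_interior hL hα x hx t j (by omega) (by omega)
    exact this
  calc ∑ j ∈ Finset.Ico 1 L, (∑ p : Fin (T+1) → Fin (L+1),
        if (p 0 : ℕ) = x ∧ (p (idx T t) : ℕ) = j then W L α T p else 0)
      ≤ ∑ _j ∈ Finset.Ico 1 L, 2 * α := Finset.sum_le_sum inner_le
    _ = 2 * ((L - 1 : ℕ) : ℝ) * α := by
        rw [Finset.sum_const, Nat.card_Ico, nsmul_eq_mul]
        ring

/-- rotation equivalence on path space -/
def rotE (T a L : ℕ) : (Fin (T+1) → Fin (L+1)) ≃ (Fin (T+1) → Fin (L+1)) where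
  toFun p := fun t => p (t + (a : Fin (T+1)))
  invFun p := fun t => p (t - (a : Fin (T+1)))
  left_inv p := funext fun t => congrArg p (sub_add_cancel t _)
  right_inv p := funext fun t => congrArg p (add_sub_cancel_right t _)

lemma stay_shift (hL : 1 ≤ L) (hα : α ∈ Set.Ioc (0:ℝ) 1) (T : ℕ) (x : ℕ)
    (hx : x = 0 ∨ x = L) (B : ℕ → Set ℕ) (hB : ∀ t ≤ T, (L - x) ∉ B t)
    (a : ℕ) (ha1 : 1 ≤ a) (ha : a ≤ T) :
    bdStay L α T x B
      ≤ bdStay L α T x (fun t => B ((t + a) % (T+1))) + 6 * ((L - 1 : ℕ) : ℝ) * α := by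
  have hxL : x ≤ L := by rcases hx with h | h <;> omega
  have hstay : bdStay L α T x B
      = ∑ p : Fin (T+1) → Fin (L+1),
          if (p 0 : ℕ) = x ∧ (∀ t : Fin (T+1), (p t : ℕ) ∈ B (t : ℕ)) then W L α T p else 0 :=
    rfl
  have hstay' : bdStay L α T x (fun t => B ((t + a) % (T+1)))
      = ∑ p : Fin (T+1) → Fin (L+1),
          if (p 0 : ℕ) = x ∧ (∀ t : Fin (T+1), (p t : ℕ) ∈ B (((t : ℕ) + a) % (T+1)))
            then W L α T p else 0 :=
    rfl
  have split : ∀ p : Fin (T+1) → Fin (L+1),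
      (if (p 0 : ℕ) = x ∧ (∀ t : Fin (T+1), (p t : ℕ) ∈ B (t : ℕ)) then W L α T p else 0)
      = (if ((p 0 : ℕ) = x ∧ (∀ t : Fin (T+1), (p t : ℕ) ∈ B (t : ℕ)))
            ∧ ((p (idx T (a-1)) : ℕ) = x ∧ (p (idx T a) : ℕ) = x ∧ (p (idx T T) : ℕ) = x)
          then W L α T p else 0)
        + (if ((p 0 : ℕ) = x ∧ (∀ t : Fin (T+1), (p t : ℕ) ∈ B (t : ℕ)))
            ∧ ¬((p (idx T (a-1)) : ℕ) = x ∧ (p (idx T a) : ℕ) = x ∧ (p (idx T T) : ℕ) = x)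
          then W L α T p else 0) := by
    intro p
    by_cases h1 : (p 0 : ℕ) = x ∧ (∀ t : Fin (T+1), (p t : ℕ) ∈ B (t : ℕ)) <;>
      by_cases h2 : ((p (idx T (a-1)) : ℕ) = x ∧ (p (idx T a) : ℕ) = x ∧ (p (idx T T) : ℕ) = x) <;>
        simp [h1, h2]
  have e1 : (∑ p : Fin (T+1) → Fin (L+1),
        if (p 0 : ℕ) = x ∧ (∀ t : Fin (T+1), (p t : ℕ) ∈ B (t : ℕ)) then W L α T p else 0)
      = ∑ p : Fin (T+1) → Fin (L+1),
          ((if ((p 0 : ℕ) = x ∧ (∀ t : Fin (T+1), (p t : ℕ) ∈ B (t : ℕ)))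
            ∧ ((p (idx T (a-1)) : ℕ) = x ∧ (p (idx T a) : ℕ) = x ∧ (p (idx T T) : ℕ) = x)
          then W L α T p else 0)
        + (if ((p 0 : ℕ) = x ∧ (∀ t : Fin (T+1), (p t : ℕ) ∈ B (t : ℕ)))
            ∧ ¬((p (idx T (a-1)) : ℕ) = x ∧ (p (idx T a) : ℕ) = x ∧ (p (idx T T) : ℕ) = x)
          then W L α T p else 0)) :=
    Finset.sum_congr rfl fun p _ => split p
  have part1 : (∑ p : Fin (T+1) → Fin (L+1),
        if ((p 0 : ℕ) = x ∧ (∀ t : Fin (T+1), (p t : ℕ) ∈ B (t : ℕ)))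
            ∧ ((p (idx T (a-1)) : ℕ) = x ∧ (p (idx T a) : ℕ) = x ∧ (p (idx T T) : ℕ) = x)
          then W L α T p else 0)
      ≤ bdStay L α T x (fun t => B ((t + a) % (T+1))) := by
    rw [hstay']
    rw [← Equiv.sum_comp (rotE T a L) (fun p => if (p 0 : ℕ) = x ∧
        (∀ t : Fin (T+1), (p t : ℕ) ∈ B (((t : ℕ) + a) % (T+1))) then W L α T p else 0)]
    apply Finset.sum_le_sum
    intro p _
    by_cases h : ((p 0 : ℕ) = x ∧ (∀ t : Fin (T+1), (p t : ℕ) ∈ B (t : ℕ)))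
        ∧ ((p (idx T (a-1)) : ℕ) = x ∧ (p (idx T a) : ℕ) = x ∧ (p (idx T T) : ℕ) = x)
    · rw [if_pos h]
      obtain ⟨⟨hp0, hall⟩, hpin1, hpin2, hpin3⟩ := h
      have hzeroa : (0 : Fin (T+1)) + (a : Fin (T+1)) = idx T a := by
        rw [fin_add_cast_eq_idx]
        norm_num
      have hC' : ((rotE T a L) p 0 : ℕ) = x ∧
          (∀ t : Fin (T+1), ((rotE T a L) p t : ℕ) ∈ B (((t : ℕ) + a) % (T+1))) := by
        constructor
        · show (p ((0 : Fin (T+1)) + (a : Fin (T+1))) : ℕ) = x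
          rw [hzeroa]
          exact hpin2
        · intro t
          show (p (t + (a : Fin (T+1))) : ℕ) ∈ B (((t : ℕ) + a) % (T+1))
          rw [fin_add_cast_eq_idx]
          exact hall (idx T ((t : ℕ) + a))
      rw [if_pos hC']
      have hw : W L α T ((rotE T a L) p) = W L α T p := by
        have h0' : (p (idx T 0) : ℕ) = x := by rw [idx_zero]; exact hp0
        exact W_rot T a ha1 ha x p h0' hpin1 hpin2 hpin3
      rw [hw]
    · rw [if_neg h]
      split_ifs
      · exact W_nonneg hα T _
      · exact le_refl 0
  have part2 : (∑ p : Fin (T+1) → Fin (L+1),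
        if ((p 0 : ℕ) = x ∧ (∀ t : Fin (T+1), (p t : ℕ) ∈ B (t : ℕ)))
            ∧ ¬((p (idx T (a-1)) : ℕ) = x ∧ (p (idx T a) : ℕ) = x ∧ (p (idx T T) : ℕ) = x)
          then W L α T p else 0)
      ≤ 6 * ((L - 1 : ℕ) : ℝ) * α := by
    have hint : ∀ (p : Fin (T+1) → Fin (L+1)), (p 0 : ℕ) = x →
        (∀ t : Fin (T+1), (p t : ℕ) ∈ B (t : ℕ)) →
        ∀ t, t ≤ T → (p (idx T t) : ℕ) ≠ x →
        ((p 0 : ℕ) = x ∧ 0 < (p (idx T t) : ℕ) ∧ (p (idx T t) : ℕ) < L) := by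
      intro p hp0 hall t ht hne
      refine ⟨hp0, ?_, ?_⟩ <;>
      · have h1 : (p (idx T t) : ℕ) ∈ B t := by
          have := hall (idx T t)
          rwa [idx_val ht] at this
        have h2 : (p (idx T t) : ℕ) ≠ L - x := fun hEq => hB t ht (hEq ▸ h1)
        have h3 : (p (idx T t) : ℕ) ≤ L := Fin.is_le _
        rcases hx with h | h <;> omega
    have pointwise : ∀ p : Fin (T+1) → Fin (L+1),
        (if ((p 0 : ℕ) = x ∧ (∀ t : Fin (T+1), (p t : ℕ) ∈ B (t : ℕ)))
            ∧ ¬((p (idx T (a-1)) : ℕ) = x ∧ (p (idx T a) : ℕ) = x ∧ (p (idx T T) : ℕ) = x)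
          then W L α T p else 0)
        ≤ (if (p 0 : ℕ) = x ∧ 0 < (p (idx T (a-1)) : ℕ) ∧ (p (idx T (a-1)) : ℕ) < L
            then W L α T p else 0)
          + (if (p 0 : ℕ) = x ∧ 0 < (p (idx T a) : ℕ) ∧ (p (idx T a) : ℕ) < L
            then W L α T p else 0)
          + (if (p 0 : ℕ) = x ∧ 0 < (p (idx T T) : ℕ) ∧ (p (idx T T) : ℕ) < L
            then W L α T p else 0) := by
      intro p
      have n1 : (0:ℝ) ≤ if (p 0 : ℕ) = x ∧ 0 < (p (idx T (a-1)) : ℕ) ∧ (p (idx T (a-1)) : ℕ) < L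
          then W L α T p else 0 := by
        split_ifs
        · exact W_nonneg hα T p
        · exact le_refl 0
      have n2 : (0:ℝ) ≤ if (p 0 : ℕ) = x ∧ 0 < (p (idx T a) : ℕ) ∧ (p (idx T a) : ℕ) < L
          then W L α T p else 0 := by
        split_ifs
        · exact W_nonneg hα T p
        · exact le_refl 0
      have n3 : (0:ℝ) ≤ if (p 0 : ℕ) = x ∧ 0 < (p (idx T T) : ℕ) ∧ (p (idx T T) : ℕ) < L
          then W L α T p else 0 := by
        split_ifs
        · exact W_nonneg hα T p
        · exact le_refl 0
      by_cases h : ((p 0 : ℕ) = x ∧ (∀ t : Fin (T+1), (p t : ℕ) ∈ B (t : ℕ)))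
          ∧ ¬((p (idx T (a-1)) : ℕ) = x ∧ (p (idx T a) : ℕ) = x ∧ (p (idx T T) : ℕ) = x)
      · rw [if_pos h]
        obtain ⟨⟨hp0, hall⟩, hnpin⟩ := h
        by_cases b1 : (p (idx T (a-1)) : ℕ) = x
        · by_cases b2 : (p (idx T a) : ℕ) = x
          · have b3 : (p (idx T T) : ℕ) ≠ x := fun hc => hnpin ⟨b1, b2, hc⟩
            rw [if_pos (hint p hp0 hall T (le_refl T) b3)]
            linarith
          · rw [if_pos (hint p hp0 hall a ha b2)]
            linarith
        · rw [if_pos (hint p hp0 hall (a-1) (by omega) b1)]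
          linarith
      · rw [if_neg h]
        linarith
    calc (∑ p : Fin (T+1) → Fin (L+1),
        if ((p 0 : ℕ) = x ∧ (∀ t : Fin (T+1), (p t : ℕ) ∈ B (t : ℕ)))
            ∧ ¬((p (idx T (a-1)) : ℕ) = x ∧ (p (idx T a) : ℕ) = x ∧ (p (idx T T) : ℕ) = x)
          then W L α T p else 0)
        ≤ ∑ p : Fin (T+1) → Fin (L+1),
          ((if (p 0 : ℕ) = x ∧ 0 < (p (idx T (a-1)) : ℕ) ∧ (p (idx T (a-1)) : ℕ) < L
            then W L α T p else 0)
          + (if (p 0 : ℕ) = x ∧ 0 < (p (idx T a) : ℕ) ∧ (p (idx T a) : ℕ) < L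
            then W L α T p else 0)
          + (if (p 0 : ℕ) = x ∧ 0 < (p (idx T T) : ℕ) ∧ (p (idx T T) : ℕ) < L
            then W L α T p else 0)) := Finset.sum_le_sum fun p _ => pointwise p
      _ ≤ 6 * ((L - 1 : ℕ) : ℝ) * α := by
        rw [Finset.sum_add_distrib, Finset.sum_add_distrib]
        have i1 := bad_bound hL hα T x (a-1) (by omega) hx
        have i2 := bad_bound hL hα T x a ha hx
        have i3 := bad_bound hL hα T x T (le_refl T) hx
        linarith
  rw [hstay, e1, Finset.sum_add_distrib]
  linarith

end SeparationAux

/-- Cyclic shifts of a separating sequence with `0 ∈ A_t`, `L ∉ A_t` lose at most `12·L·α`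
in separation: `S^A_T(0,L) ≤ S^{A^a}_T(0,L) + 12·L·α` where `A^a_t = A_{(t+a) mod (T+1)}`. -/
theorem separation_cyclic_shift (L : ℕ) (hL : 1 ≤ L) (α : ℝ) (hα : α ∈ Set.Ioc (0 : ℝ) 1)
    (T : ℕ) (A : ℕ → Set ℕ) (hA : ∀ t ≤ T, 0 ∈ A t ∧ (L : ℕ) ∉ A t)
    (a : ℕ) (ha : a ≤ T) :
    bdSep L α T A ≤ bdSep L α T (fun t => A ((t + a) % (T + 1))) + 12 * L * α := by
  classical
  have hα0 := hα.1
  rcases Nat.eq_zero_or_pos a with rfl | ha1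
  · have he : bdSep L α T (fun t => A ((t + 0) % (T + 1))) = bdSep L α T A := by
      unfold bdSep bdStay
      congr 1
      · apply Finset.sum_congr rfl
        intro p _
        have hc : ((p 0 : ℕ) = 0 ∧ ∀ t : Fin (T+1), (p t : ℕ) ∈ (fun s => A ((s + 0) % (T + 1))) (t:ℕ))
            = ((p 0 : ℕ) = 0 ∧ ∀ t : Fin (T+1), (p t : ℕ) ∈ A (t:ℕ)) := by
          apply propext
          apply and_congr_right'
          apply forall_congr'
          intro t
          simp only [add_zero, Nat.mod_eq_of_lt t.isLt]
        simp only [hc]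
      · apply Finset.sum_congr rfl
        intro p _
        have hc : ((p 0 : ℕ) = L ∧ ∀ t : Fin (T+1), (p t : ℕ) ∈ (fun s => ((fun u => A ((u + 0) % (T + 1))) s)ᶜ) (t:ℕ))
            = ((p 0 : ℕ) = L ∧ ∀ t : Fin (T+1), (p t : ℕ) ∈ (fun s => (A s)ᶜ) (t:ℕ)) := by
          apply propext
          apply and_congr_right'
          apply forall_congr'
          intro t
          simp only [add_zero, Nat.mod_eq_of_lt t.isLt]
        simp only [hc]
        congr
    rw [he]
    have : (0:ℝ) ≤ 12 * L * α := by positivity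
    linarith
  · have hs1 : bdStay L α T 0 A
        ≤ bdStay L α T 0 (fun t => A ((t + a) % (T+1))) + 6 * ((L - 1 : ℕ) : ℝ) * α := by
      apply stay_shift hL hα T 0 (Or.inl rfl) A _ a ha1 ha
      intro t ht
      simpa using (hA t ht).2
    have hs2 : bdStay L α T L (fun t => (A t)ᶜ)
        ≤ bdStay L α T L (fun t => (A ((t + a) % (T+1)))ᶜ) + 6 * ((L - 1 : ℕ) : ℝ) * α := by
      apply stay_shift hL hα T L (Or.inr rfl) (fun t => (A t)ᶜ) _ a ha1 ha
      intro t ht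
      simp only [Nat.sub_self, Set.mem_compl_iff, not_not]
      exact (hA t ht).1
    have hcast : ((L - 1 : ℕ) : ℝ) ≤ (L : ℝ) := by
      have : (L - 1 : ℕ) ≤ L := Nat.sub_le L 1
      exact_mod_cast this
    have hfin : 12 * ((L - 1 : ℕ) : ℝ) * α ≤ 12 * (L : ℝ) * α := by nlinarith
    unfold bdSep
    have goal2 : bdStay L α T L (fun t => ((fun s => A ((s + a) % (T + 1))) t)ᶜ)
        = bdStay L α T L (fun t => (A ((t + a) % (T+1)))ᶜ) := rfl
    rw [goal2]
    linarith
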